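/- Let Σ₀ = diag(a²/4, b²/4) with a,b > 0, let R_t be the 2×2 rotation matrix by angle t, and Σ_t = R_t Σ₀ R_{−t}. Then tr((Σ₀^{1/2} Σ_t Σ₀^{1/2})^{1/2}) = (1/4)·√((a²+b²)² cos² t + 4a²b² sin² t). -/

import Mathlib

open Matrix Real

/-- The 2×2 rotation matrix by angle `t`. -/
noncomputable def rotM (t : ℝ) : Matrix (Fin 2) (Fin 2) ℝ :=
  !![Real.cos t, -Real.sin t; Real.sin t, Real.cos t]

/-- With `Sig0 = diag(a²/4, b²/4)`, `Σ_t = R_t Sig0 R_{−t}`, and `Sig0^{1/2} = diag(a/2, b/2)`,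
the positive-semidefinite square root `Q` of `Sig0^{1/2} Σ_t Sig0^{1/2}` satisfies
`tr Q = (1/4)·√((a²+b²)² cos² t + 4a²b² sin² t)`. -/
theorem trace_sqrt_covariance_product (a b t : ℝ) (ha : 0 < a) (hb : 0 < b) :
    let Sig0 : Matrix (Fin 2) (Fin 2) ℝ := Matrix.diagonal ![a ^ 2 / 4, b ^ 2 / 4]
    let Sigt : Matrix (Fin 2) (Fin 2) ℝ := rotM t * Sig0 * rotM (-t)
    let S : Matrix (Fin 2) (Fin 2) ℝ := Matrix.diagonal ![a / 2, b / 2]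
    ∀ Q : Matrix (Fin 2) (Fin 2) ℝ, Q.PosSemidef → Q * Q = S * Sigt * S →
      Q.trace = (1 / 4) * Real.sqrt ((a ^ 2 + b ^ 2) ^ 2 * Real.cos t ^ 2
        + 4 * a ^ 2 * b ^ 2 * Real.sin t ^ 2) := by
  intro Sig0 Sigt S Q hQ hQQ
  have hpyth := sin_sq_add_cos_sq t
  have hsym : Q 1 0 = Q 0 1 := by
    have h := hQ.1
    have := congrFun (congrFun h 0) 1
    simpa [Matrix.conjTranspose_apply] using this
  have hd0 : (0:ℝ) ≤ Q 0 0 := by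
    have := hQ.dotProduct_mulVec_nonneg (Pi.single 0 1)
    simpa [dotProduct, Matrix.mulVec, Fin.sum_univ_two, Pi.single_apply] using this
  have hd1 : (0:ℝ) ≤ Q 1 1 := by
    have := hQ.dotProduct_mulVec_nonneg (Pi.single 1 1)
    simpa [dotProduct, Matrix.mulVec, Fin.sum_univ_two, Pi.single_apply] using this
  have htrnn : 0 ≤ Q.trace := by
    rw [Matrix.trace_fin_two]; linarith
  have hdetnn : 0 ≤ Q.det := by
    rw [hQ.1.det_eq_prod_eigenvalues]
    exact Finset.prod_nonneg fun i _ => hQ.eigenvalues_nonneg i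
  have hSig0 : Sig0 = !![a ^ 2 / 4, 0; 0, b ^ 2 / 4] := by
    ext i j; fin_cases i <;> fin_cases j <;> simp [Sig0, Matrix.diagonal]
  have hS : S = !![a / 2, 0; 0, b / 2] := by
    ext i j; fin_cases i <;> fin_cases j <;> simp [S, Matrix.diagonal]
  have hRHS : S * Sigt * S = !![(a ^ 2 / 4) * (Real.cos t ^ 2 * (a ^ 2 / 4)
        + Real.sin t ^ 2 * (b ^ 2 / 4)),
        (a / 2) * (b / 2) * Real.sin t * Real.cos t * (a ^ 2 / 4 - b ^ 2 / 4);
        (a / 2) * (b / 2) * Real.sin t * Real.cos t * (a ^ 2 / 4 - b ^ 2 / 4),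
        (b ^ 2 / 4) * (Real.sin t ^ 2 * (a ^ 2 / 4) + Real.cos t ^ 2 * (b ^ 2 / 4))] := by
    show S * (rotM t * Sig0 * rotM (-t)) * S = _
    rw [hSig0, hS]
    simp only [rotM, Real.cos_neg, Real.sin_neg, Matrix.mul_fin_two]
    congr 1 <;> ring
  -- determinant computation
  have hdet : Q.det = a ^ 2 * b ^ 2 / 16 := by
    have h2 : Q.det ^ 2 = (a ^ 2 * b ^ 2 / 16) ^ 2 := by
      have : (Q * Q).det = (a ^ 2 * b ^ 2 / 16) ^ 2 := by
        rw [hQQ, hRHS, Matrix.det_fin_two_of]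
        linear_combination ((a ^ 2 * b ^ 2 / 16) ^ 2
          * (Real.sin t ^ 2 + Real.cos t ^ 2 + 1)) * hpyth
      rw [← this, Matrix.det_mul]; ring
    have hc : (0:ℝ) ≤ a ^ 2 * b ^ 2 / 16 := by positivity
    calc Q.det = Real.sqrt (Q.det ^ 2) := (Real.sqrt_sq hdetnn).symm
      _ = Real.sqrt ((a ^ 2 * b ^ 2 / 16) ^ 2) := by rw [h2]
      _ = a ^ 2 * b ^ 2 / 16 := Real.sqrt_sq hc
  -- trace of Q*Q
  have htrQQ : (Q * Q).trace
      = ((a ^ 4 + b ^ 4) * Real.cos t ^ 2 + 2 * a ^ 2 * b ^ 2 * Real.sin t ^ 2) / 16 := by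
    rw [hQQ, hRHS, Matrix.trace_fin_two_of]
    ring
  have htr2 : Q.trace ^ 2 = (Q * Q).trace + 2 * Q.det := by
    simp only [Matrix.trace_fin_two, Matrix.det_fin_two, Matrix.mul_apply,
      Fin.sum_univ_two, hsym]
    ring
  have key : Q.trace ^ 2 = (1 / 16) * ((a ^ 2 + b ^ 2) ^ 2 * Real.cos t ^ 2
      + 4 * a ^ 2 * b ^ 2 * Real.sin t ^ 2) := by
    rw [htr2, htrQQ, hdet]
    nlinarith [hpyth]
  calc Q.trace = Real.sqrt (Q.trace ^ 2) := (Real.sqrt_sq htrnn).symm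
    _ = Real.sqrt ((1 / 16) * ((a ^ 2 + b ^ 2) ^ 2 * Real.cos t ^ 2
        + 4 * a ^ 2 * b ^ 2 * Real.sin t ^ 2)) := by rw [key]
    _ = Real.sqrt (1 / 16) * Real.sqrt ((a ^ 2 + b ^ 2) ^ 2 * Real.cos t ^ 2
        + 4 * a ^ 2 * b ^ 2 * Real.sin t ^ 2) := Real.sqrt_mul (by norm_num) _
    _ = (1 / 4) * Real.sqrt ((a ^ 2 + b ^ 2) ^ 2 * Real.cos t ^ 2
        + 4 * a ^ 2 * b ^ 2 * Real.sin t ^ 2) := by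
        rw [show (1/16 : ℝ) = (1/4)^2 by norm_num, Real.sqrt_sq (by norm_num)]
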